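/- arXiv:1903.03520 — 2 statements merged into one kernel-verified Lean document; each statement's English description precedes it below -/
import Mathlib

section
/- Let x, y be strings over a metric space, let l be the maximum run length in x and y, and let c(x), c(y) be the strings obtained by collapsing each run to length one. Then dtw(x, y) ≤ l · dtw(c(x), c(y)). -/
/-- `xb` is an expansion of `x`: each letter of `x` is duplicated in place a positive
number of times. -/
def IsExpansion {α : Type*} (x xb : List α) : Prop :=
  ∃ ks : List ℕ, ks.length = x.length ∧ (∀ k ∈ ks, 0 < k) ∧
    xb = (List.zipWith (fun a k => List.replicate k a) x ks).flatten

/-- `(xb, yb)` is a correspondence between `x` and `y`: a pair of equal-length expansions. -/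
def IsCorrespondence {α : Type*} (x y xb yb : List α) : Prop :=
  IsExpansion x xb ∧ IsExpansion y yb ∧ xb.length = yb.length

/-- The cost of a correspondence: summed distances of aligned letters. -/
noncomputable def corrCost {α : Type*} (δ : α → α → ℝ) (xb yb : List α) : ℝ :=
  (List.zipWith δ xb yb).sum

/-- Dynamic time warping distance with respect to a distance function `δ`. -/
noncomputable def dtw {α : Type*} (δ : α → α → ℝ) (x y : List α) : ℝ :=
  sInf {c | ∃ xb yb, IsCorrespondence x y xb yb ∧ c = corrCost δ xb yb}

/-- Generalized Hamming distance on letters. -/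
noncomputable def hamDist {α : Type*} [DecidableEq α] (a b : α) : ℝ := if a = b then 0 else 1

/-- DTW over generalized Hamming space. -/
noncomputable def dtw0 {α : Type*} [DecidableEq α] (x y : List α) : ℝ := dtw hamDist x y

/-- The maximal run length appearing in a string: max of lengths of maximal blocks of
equal consecutive letters. -/
def maxRunLen {α : Type*} [DecidableEq α] (x : List α) : ℕ :=
  ((x.splitBy (fun a b => decide (a = b))).map List.length).foldr max 0

/-! ### Auxiliary lemmas -/

lemma isExpansion_nil_iff {α : Type*} {z : List α} : IsExpansion [] z ↔ z = [] := by
  constructor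
  · rintro ⟨ks, hlen, -, rfl⟩
    simp
  · rintro rfl; exact ⟨[], rfl, by simp, rfl⟩

lemma isExpansion_cons_iff {α : Type*} {a : α} {x z : List α} :
    IsExpansion (a :: x) z ↔
      ∃ k z', 0 < k ∧ IsExpansion x z' ∧ z = List.replicate k a ++ z' := by
  constructor
  · rintro ⟨ks, hlen, hpos, rfl⟩
    cases ks with
    | nil => simp at hlen
    | cons k ks =>
      exact ⟨k, _, hpos k (by simp),
        ⟨ks, by simpa using hlen, fun k' hk' => hpos k' (by simp [hk']), rfl⟩, by simp⟩
  · rintro ⟨k, z', hk, ⟨ks, hlen, hpos, rfl⟩, rfl⟩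
    refine ⟨k :: ks, by simp [hlen], ?_, by simp⟩
    rintro k' hk'
    rcases List.mem_cons.mp hk' with rfl | h
    · exact hk
    · exact hpos _ h

lemma isExpansion_replicate_append {α : Type*} {a : α} {x z : List α} {k N : ℕ}
    (hx : IsExpansion x z) (hk : 0 < k) (hkN : k ≤ N) :
    IsExpansion (List.replicate k a ++ x) (List.replicate N a ++ z) := by
  induction k generalizing N with
  | zero => omega
  | succ k ih =>
    rcases Nat.eq_zero_or_pos k with rfl | hpos
    · simp only [Nat.zero_add, List.replicate_one, List.singleton_append]
      rw [isExpansion_cons_iff]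
      exact ⟨N, z, by omega, hx, by simp⟩
    · rw [List.replicate_succ, List.cons_append, isExpansion_cons_iff]
      refine ⟨1, List.replicate (N - 1) a ++ z, one_pos, ih hpos (by omega), ?_⟩
      rw [← List.append_assoc, ← List.replicate_add]
      congr 2
      omega

lemma flatten_replicate_replicate {α : Type*} (a : α) (m l : ℕ) :
    (List.replicate m (List.replicate l a)).flatten = List.replicate (l * m) a := by
  induction m with
  | zero => simp
  | succ m ih => rw [List.replicate_succ, List.flatten_cons, ih, ← List.replicate_add]; congr 1; ring

lemma isExpansion_flatten_replicate {α : Type*} {l : ℕ} :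
    ∀ (c : List α) (ks : List ℕ) (u : List α),
      ks.length = c.length → (∀ k ∈ ks, 0 < k ∧ k ≤ l) →
      IsExpansion c u →
      IsExpansion ((List.zipWith (fun a k => List.replicate k a) c ks).flatten)
        ((u.map (fun a => List.replicate l a)).flatten) := by
  intro c
  induction c with
  | nil =>
    intro ks u hlen _ hu
    obtain rfl : ks = [] := List.length_eq_zero_iff.mp (by simpa using hlen)
    rw [isExpansion_nil_iff.mp hu]
    simpa using isExpansion_nil_iff.mpr rfl
  | cons a c ih =>
    intro ks u hlen hks hu
    cases ks with
    | nil => simp at hlen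
    | cons k ks =>
      rw [isExpansion_cons_iff] at hu
      obtain ⟨m, u', hm, hu', rfl⟩ := hu
      have h1 : ((List.replicate m a ++ u').map (fun a => List.replicate l a)).flatten
          = List.replicate (l * m) a ++ (u'.map (fun a => List.replicate l a)).flatten := by
        rw [List.map_append, List.flatten_append, List.map_replicate,
          flatten_replicate_replicate]
      rw [h1, List.zipWith_cons_cons, List.flatten_cons]
      have hk := hks k (by simp)
      exact isExpansion_replicate_append
        (ih ks u' (by simpa using hlen) (fun k' hk' => hks k' (by simp [hk'])) hu')
        hk.1 (hk.2.trans (Nat.le_mul_of_pos_right l hm))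

lemma length_flatten_map_replicate {α : Type*} (l : ℕ) (u : List α) :
    ((u.map (fun a => List.replicate l a)).flatten).length = l * u.length := by
  induction u with
  | nil => simp
  | cons a u ih => simp [ih]; ring

lemma corrCost_flatten_replicate {α : Type*} (δ : α → α → ℝ) (l : ℕ) :
    ∀ ub vb : List α, ub.length = vb.length →
      corrCost δ ((ub.map (fun a => List.replicate l a)).flatten)
        ((vb.map (fun a => List.replicate l a)).flatten) = l * corrCost δ ub vb := by
  intro ub
  induction ub with
  | nil =>
    intro vb h
    obtain rfl : vb = [] := List.length_eq_zero_iff.mp (by simpa using h.symm)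
    simp [corrCost]
  | cons a ub ih =>
    intro vb h
    cases vb with
    | nil => simp at h
    | cons b vb =>
      simp only [List.map_cons, List.flatten_cons]
      rw [corrCost, List.zipWith_append (by simp), List.sum_append]
      have h1 : List.zipWith δ (List.replicate l a) (List.replicate l b)
          = List.replicate l (δ a b) := by
        induction l with
        | zero => simp
        | succ n ihn => simp [List.replicate_succ, ihn]
      have h2 : (List.zipWith δ (List.map (fun a => List.replicate l a) ub).flatten
          (List.map (fun a => List.replicate l a) vb).flatten).sum
          = (l : ℝ) * corrCost δ ub vb := ih vb (by simpa using h)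
      rw [h1, List.sum_replicate, h2, nsmul_eq_mul]
      show (l : ℝ) * δ a b + (l : ℝ) * corrCost δ ub vb
        = (l : ℝ) * (List.zipWith δ (a :: ub) (b :: vb)).sum
      rw [List.zipWith_cons_cons, List.sum_cons]
      show _ = (l : ℝ) * (δ a b + corrCost δ ub vb)
      ring

lemma isExpansion_self_map_replicate {α : Type*} {l : ℕ} (hl : 0 < l) (u : List α) :
    IsExpansion u ((u.map (fun a => List.replicate l a)).flatten) := by
  refine ⟨List.replicate u.length l, by simp, by simp [hl], ?_⟩
  congr 1
  induction u with
  | nil => simp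
  | cons a u ih => simp [List.replicate_succ, ih]

lemma corrCost_nonneg {α : Type*} [MetricSpace α] :
    ∀ xb yb : List α, 0 ≤ corrCost dist xb yb := by
  intro xb
  induction xb with
  | nil => intro yb; simp [corrCost]
  | cons a xb ih =>
    intro yb
    cases yb with
    | nil => simp [corrCost]
    | cons b yb =>
      have := ih yb
      rw [corrCost, List.zipWith_cons_cons, List.sum_cons]
      exact add_nonneg dist_nonneg this

lemma expansion_ne_nil {α : Type*} {x z : List α} (hx : x ≠ []) (h : IsExpansion x z) :
    z ≠ [] := by
  cases x with
  | nil => exact absurd rfl hx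
  | cons a x =>
    rw [isExpansion_cons_iff] at h
    obtain ⟨k, z', hk, -, rfl⟩ := h
    simp
    omega

lemma exists_corr {α : Type*} {x y : List α} (hx : x ≠ []) (hy : y ≠ []) :
    ∃ xb yb, IsCorrespondence x y xb yb := by
  refine ⟨(x.map (fun a => List.replicate y.length a)).flatten,
    (y.map (fun a => List.replicate x.length a)).flatten,
    isExpansion_self_map_replicate (List.length_pos_iff.mpr hy) x,
    isExpansion_self_map_replicate (List.length_pos_iff.mpr hx) y, ?_⟩
  rw [length_flatten_map_replicate, length_flatten_map_replicate, Nat.mul_comm]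

lemma dtw_nil_nil {α : Type*} (δ : α → α → ℝ) : dtw δ ([] : List α) [] = 0 := by
  have hset : {c | ∃ xb yb, IsCorrespondence ([] : List α) [] xb yb ∧ c = corrCost δ xb yb}
      = {0} := by
    ext c
    simp only [Set.mem_setOf_eq, Set.mem_singleton_iff]
    constructor
    · rintro ⟨xb, yb, ⟨hx, hy, -⟩, rfl⟩
      rw [isExpansion_nil_iff.mp hx, isExpansion_nil_iff.mp hy]
      simp [corrCost]
    · rintro rfl
      exact ⟨[], [], ⟨isExpansion_nil_iff.mpr rfl, isExpansion_nil_iff.mpr rfl, rfl⟩,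
        by simp [corrCost]⟩
  rw [dtw, hset, csInf_singleton]

lemma dtw_nil_left {α : Type*} (δ : α → α → ℝ) {y : List α} (hy : y ≠ []) :
    dtw δ [] y = 0 := by
  have hset : {c | ∃ xb yb, IsCorrespondence ([] : List α) y xb yb ∧ c = corrCost δ xb yb}
      = ∅ := by
    ext c
    simp only [Set.mem_setOf_eq, Set.mem_empty_iff_false, iff_false]
    rintro ⟨xb, yb, ⟨hx, hyy, hlen⟩, -⟩
    rw [isExpansion_nil_iff.mp hx] at hlen
    exact expansion_ne_nil hy hyy (List.length_eq_zero_iff.mp hlen.symm)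
  rw [dtw, hset, Real.sInf_empty]

lemma dtw_nil_right {α : Type*} (δ : α → α → ℝ) {x : List α} (hx : x ≠ []) :
    dtw δ x [] = 0 := by
  have hset : {c | ∃ xb yb, IsCorrespondence x ([] : List α) xb yb ∧ c = corrCost δ xb yb}
      = ∅ := by
    ext c
    simp only [Set.mem_setOf_eq, Set.mem_empty_iff_false, iff_false]
    rintro ⟨xb, yb, ⟨hxx, hyy, hlen⟩, -⟩
    rw [isExpansion_nil_iff.mp hyy] at hlen
    exact expansion_ne_nil hx hxx (List.length_eq_zero_iff.mp hlen)
  rw [dtw, hset, Real.sInf_empty]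

lemma splitByLoop_eq_append' {α : Type*} (r : α → α → Bool) (l : List α) (a : α) (g : List α)
    (gs : List (List α)) :
    List.splitBy.loop r l a g gs = gs.reverse ++ List.splitBy.loop r l a g [] := by
  induction l generalizing a g gs with
  | nil => simp [List.splitBy.loop]
  | cons b l IH =>
    simp_rw [List.splitBy.loop]
    split <;> rw [IH]
    conv_rhs => rw [IH]
    simp

lemma splitBy_replicate_append {α : Type*} [DecidableEq α] {a : α} {k : ℕ} (hk : 0 < k)
    {t : List α} (ht : ∀ b ∈ t.head?, b ≠ a) :
    List.splitBy (fun p q => decide (p = q)) (List.replicate k a ++ t)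
      = List.replicate k a :: List.splitBy (fun p q => decide (p = q)) t := by
  have key : ∀ (j : ℕ) (g : List α),
      List.splitBy.loop (fun p q => decide (p = q)) (List.replicate j a ++ t) a g []
        = List.splitBy.loop (fun p q => decide (p = q)) t a (List.replicate j a ++ g) [] := by
    intro j
    induction j with
    | zero => intro g; simp
    | succ j ih =>
      intro g
      rw [List.replicate_succ, List.cons_append, List.splitBy.loop]
      simp only [decide_true]
      rw [ih]
      congr 1
      rw [← List.singleton_append, ← List.append_assoc, ← List.replicate_succ',
        List.replicate_succ]
  cases k with
  | zero => omega
  | succ k =>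
    rw [List.replicate_succ, List.cons_append, List.splitBy]
    rw [key k []]
    cases t with
    | nil =>
      rw [List.splitBy.loop]
      simp only [List.append_nil, List.reverse_cons, List.reverse_replicate]
      rw [← List.replicate_succ', List.replicate_succ]
      rfl
    | cons b t' =>
      have hba : decide (a = b) = false := by
        simpa using fun h => (ht b rfl) h.symm
      rw [List.splitBy.loop]
      rw [hba]
      rw [splitByLoop_eq_append' _ t' b [] [(a :: (List.replicate k a ++ [])).reverse]]
      simp only [List.append_nil, List.reverse_cons, List.reverse_replicate,
        List.reverse_singleton, List.reverse_nil, List.nil_append, List.singleton_append]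
      rw [← List.replicate_succ', List.replicate_succ]
      rfl

lemma maxRunLen_replicate_append {α : Type*} [DecidableEq α] {a : α} {k : ℕ} (hk : 0 < k)
    {t : List α} (ht : ∀ b ∈ t.head?, b ≠ a) :
    maxRunLen (List.replicate k a ++ t) = max k (maxRunLen t) := by
  unfold maxRunLen
  rw [splitBy_replicate_append hk ht]
  simp

lemma destutter_replicate_append {α : Type*} [DecidableEq α] {a : α} {k : ℕ} (hk : 0 < k)
    {t : List α} (ht : ∀ b ∈ t.head?, b ≠ a) :
    (List.replicate k a ++ t).destutter (· ≠ ·) = a :: t.destutter (· ≠ ·) := by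
  have key : ∀ j : ℕ, (List.replicate j a ++ t).destutter' (· ≠ ·) a
      = t.destutter' (· ≠ ·) a := by
    intro j
    induction j with
    | zero => simp
    | succ j ih =>
      rw [List.replicate_succ, List.cons_append,
        List.destutter'_cons_neg _ (by simp), ih]
  cases k with
  | zero => omega
  | succ k =>
    rw [List.replicate_succ, List.cons_append, List.destutter_cons', key k]
    cases t with
    | nil => simp
    | cons b t' =>
      rw [List.destutter'_cons_pos _ (fun h => (ht b rfl) h.symm), List.destutter_cons']

lemma runs_decomposition_aux {α : Type*} [DecidableEq α] :
    ∀ (n : ℕ) (x : List α), x.length ≤ n →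
      ∃ ks : List ℕ, ks.length = (x.destutter (· ≠ ·)).length ∧
        (∀ k ∈ ks, 0 < k ∧ k ≤ maxRunLen x) ∧
        x = (List.zipWith (fun a k => List.replicate k a) (x.destutter (· ≠ ·)) ks).flatten := by
  intro n
  induction n with
  | zero =>
    intro x hx
    obtain rfl : x = [] := List.length_eq_zero_iff.mp (Nat.le_zero.mp hx)
    exact ⟨[], by simp, by simp, by simp⟩
  | succ n ih =>
    intro x hx
    cases hxe : x with
    | nil => exact ⟨[], by simp, by simp, by simp⟩
    | cons a x0 =>
      subst hxe
      set p : α → Bool := fun b => decide (b = a) with hp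
      set k := ((a :: x0).takeWhile p).length with hkdef
      set t := (a :: x0).dropWhile p with htdef
      have htake : (a :: x0).takeWhile p = List.replicate k a := by
        rw [hkdef]
        exact List.eq_replicate_of_mem (fun b hb => by
          simpa [hp] using List.mem_takeWhile_imp hb)
      have hxeq : List.replicate k a ++ t = a :: x0 := by
        rw [← htake, htdef, List.takeWhile_append_dropWhile]
      have hk : 0 < k := by
        rw [hkdef, List.takeWhile_cons_of_pos (by simp [hp])]
        simp
      have ht : ∀ b ∈ t.head?, b ≠ a := by
        intro b hb
        have := List.head?_dropWhile_not p (a :: x0)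
        rw [← htdef] at this
        rw [hb] at this
        simpa [hp] using this
      have htlen : t.length ≤ n := by
        have h1 : k + t.length = x0.length + 1 := by
          simpa using congrArg List.length hxeq
        have h2 : x0.length + 1 ≤ n + 1 := by simpa using hx
        omega
      obtain ⟨ks, hlen, hbound, hflat⟩ := ih t htlen
      refine ⟨k :: ks, ?_, ?_, ?_⟩
      · rw [← hxeq, destutter_replicate_append hk ht]
        simpa using hlen
      · intro k' hk'
        rw [← hxeq, maxRunLen_replicate_append hk ht]
        rcases List.mem_cons.mp hk' with rfl | h
        · exact ⟨hk, le_max_left _ _⟩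
        · exact ⟨(hbound k' h).1, le_trans (hbound k' h).2 (le_max_right _ _)⟩
      · conv_lhs => rw [← hxeq]
        rw [← hxeq, destutter_replicate_append hk ht, List.zipWith_cons_cons,
          List.flatten_cons, ← hflat]

lemma runs_decomposition {α : Type*} [DecidableEq α] (x : List α) :
    ∃ ks : List ℕ, ks.length = (x.destutter (· ≠ ·)).length ∧
      (∀ k ∈ ks, 0 < k ∧ k ≤ maxRunLen x) ∧
      x = (List.zipWith (fun a k => List.replicate k a) (x.destutter (· ≠ ·)) ks).flatten :=
  runs_decomposition_aux x.length x le_rfl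

/-- If l is the maximum run length in x and y, then
dtw(x, y) ≤ l · dtw(c(x), c(y)), where c collapses runs. -/
theorem dtw_le_maxRun_mul_dtw_destutter {α : Type*} [MetricSpace α] [DecidableEq α]
    (x y : List α) :
    dtw dist x y ≤
      (max (maxRunLen x) (maxRunLen y) : ℝ) *
        dtw dist (x.destutter (· ≠ ·)) (y.destutter (· ≠ ·)) := by
  rcases eq_or_ne x [] with rfl | hx
  · rcases eq_or_ne y [] with rfl | hy
    · rw [dtw_nil_nil, List.destutter_nil, dtw_nil_nil]
      simp
    · rw [dtw_nil_left _ hy, List.destutter_nil,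
        dtw_nil_left _ (fun h => hy ((List.destutter_eq_nil _).mp h))]
      simp
  rcases eq_or_ne y [] with rfl | hy
  · rw [dtw_nil_right _ hx, List.destutter_nil,
      dtw_nil_right _ (fun h => hx ((List.destutter_eq_nil _).mp h))]
    simp
  -- main case
  set l : ℕ := max (maxRunLen x) (maxRunLen y) with hl
  obtain ⟨ksx, hlenx, hboundx, hflatx⟩ := runs_decomposition x
  obtain ⟨ksy, hleny, hboundy, hflaty⟩ := runs_decomposition y
  set cx := x.destutter (· ≠ ·) with hcx
  set cy := y.destutter (· ≠ ·) with hcy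
  have hcxne : cx ≠ [] := fun h => hx ((List.destutter_eq_nil _).mp h)
  have hcyne : cy ≠ [] := fun h => hy ((List.destutter_eq_nil _).mp h)
  have hlpos : 0 < l := by
    cases hcxe : cx with
    | nil => exact absurd hcxe hcxne
    | cons a c =>
      have : ksx ≠ [] := by
        intro h
        rw [h, hcxe] at hlenx
        simp at hlenx
      cases ksx with
      | nil => exact absurd rfl this
      | cons k ks =>
        have := hboundx k (by simp)
        have h2 : maxRunLen x ≤ l := le_max_left _ _
        omega
  set S := {c | ∃ ub vb, IsCorrespondence cx cy ub vb ∧ c = corrCost dist ub vb} with hS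
  have hSne : S.Nonempty := by
    obtain ⟨ub, vb, hcor⟩ := exists_corr hcxne hcyne
    exact ⟨corrCost dist ub vb, ub, vb, hcor, rfl⟩
  have hkey : ∀ c ∈ S, dtw dist x y ≤ (l : ℝ) * c := by
    rintro c ⟨ub, vb, ⟨hu, hv, hlen⟩, rfl⟩
    set Xb := (ub.map (fun a => List.replicate l a)).flatten with hXb
    set Yb := (vb.map (fun a => List.replicate l a)).flatten with hYb
    have hXexp : IsExpansion x Xb := by
      rw [hflatx]
      exact isExpansion_flatten_replicate cx ksx ub hlenx
        (fun k hk => ⟨(hboundx k hk).1, le_trans (hboundx k hk).2 (le_max_left _ _)⟩) hu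
    have hYexp : IsExpansion y Yb := by
      rw [hflaty]
      exact isExpansion_flatten_replicate cy ksy vb hleny
        (fun k hk => ⟨(hboundy k hk).1, le_trans (hboundy k hk).2 (le_max_right _ _)⟩) hv
    have hlenXY : Xb.length = Yb.length := by
      rw [hXb, hYb, length_flatten_map_replicate, length_flatten_map_replicate, hlen]
    have hcost : corrCost dist Xb Yb = (l : ℝ) * corrCost dist ub vb :=
      corrCost_flatten_replicate dist l ub vb hlen
    have hmem : corrCost dist Xb Yb ∈
        {c | ∃ xb yb, IsCorrespondence x y xb yb ∧ c = corrCost dist xb yb} :=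
      ⟨Xb, Yb, ⟨hXexp, hYexp, hlenXY⟩, rfl⟩
    have hbdd : BddBelow {c | ∃ xb yb, IsCorrespondence x y xb yb ∧ c = corrCost dist xb yb} := by
      refine ⟨0, ?_⟩
      rintro c ⟨xb, yb, -, rfl⟩
      exact corrCost_nonneg xb yb
    calc dtw dist x y ≤ corrCost dist Xb Yb := csInf_le hbdd hmem
      _ = (l : ℝ) * corrCost dist ub vb := hcost
  have hlR : (0 : ℝ) < (l : ℝ) := by exact_mod_cast hlpos
  have h2 : dtw dist x y / (l : ℝ) ≤ sInf S := by
    apply le_csInf hSne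
    intro c hc
    rw [div_le_iff₀ hlR, mul_comm]
    exact hkey c hc
  have h3 : dtw dist x y ≤ sInf S * (l : ℝ) := (div_le_iff₀ hlR).mp h2
  have h4 : dtw dist cx cy = sInf S := rfl
  calc dtw dist x y ≤ sInf S * (l : ℝ) := h3
    _ = (l : ℝ) * dtw dist cx cy := by rw [h4]; ring
    _ = (max (maxRunLen x) (maxRunLen y) : ℝ) * dtw dist cx cy := by
        rw [hl]
        push_cast
        ring
end

section
/- Let T be a well-separated tree metric, let x, y be strings of length at most n over T, and let s_r(x), s_r(y) be their r-simplifications (applied letterwise). If dtw(x, y) ≤ nr/α then dtw(s_r(x), s_r(y)) ≤ nr/α and dtw_0(s_r(x), s_r(y)) ≤ 4n/α. -/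
/-- A well-separated tree metric: a rooted tree on Σ with positive edge weights
(`w v` is the weight of the edge from `v` to its parent) that are non-increasing
along root-to-leaf paths. -/
structure WSTree (σ : Type*) where
  root : σ
  par : σ → σ
  w : σ → ℝ
  depth : σ → ℕ
  depth_root : depth root = 0
  root_of_depth : ∀ v, depth v = 0 → v = root
  par_root : par root = root
  depth_par : ∀ v, v ≠ root → depth (par v) + 1 = depth v
  w_pos : ∀ v, v ≠ root → 0 < w v
  w_mono : ∀ v, v ≠ root → par v ≠ root → w v ≤ w (par v)

/-- The k-th iterated ancestor of v. -/
def WSTree.anc {σ : Type*} (T : WSTree σ) (v : σ) : ℕ → σ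
  | 0 => v
  | k + 1 => T.par (T.anc v k)

/-- The maximum weight among the first k edges on the path from v towards the root. -/
noncomputable def WSTree.upMax {σ : Type*} (T : WSTree σ) (v : σ) : ℕ → ℝ
  | 0 => 0
  | k + 1 => max (T.upMax v k) (T.w (T.anc v k))

/-- The well-separated tree metric distance: the maximum edge weight on the tree path
between u and v (minimized over common ancestors through which the path may pass). -/
noncomputable def WSTree.tdist {σ : Type*} (T : WSTree σ) (u v : σ) : ℝ :=
  sInf {c | ∃ j k, T.anc u j = T.anc v k ∧ c = max (T.upMax u j) (T.upMax v k)}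

/-- The number of steps up from v to its highest ancestor reachable via edges of
weight at most r/4. -/
noncomputable def WSTree.srIdx {σ : Type*} (T : WSTree σ) (r : ℝ) (v : σ) : ℕ :=
  sSup {k | k ≤ T.depth v ∧ ∀ i < k, T.w (T.anc v i) ≤ r / 4}

/-- The r-simplification on letters: the highest ancestor of v reachable from v via
edges of weight at most r/4. -/
noncomputable def WSTree.sr {σ : Type*} (T : WSTree σ) (r : ℝ) (v : σ) : σ :=
  T.anc v (T.srIdx r v)

section TreeAux
variable {σ : Type*} (T : WSTree σ)

lemma anc_add (v : σ) (j k : ℕ) : T.anc v (j + k) = T.anc (T.anc v j) k := by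
  induction k with
  | zero => rfl
  | succ k ih => rw [← Nat.add_assoc]; show T.par _ = T.par _; rw [ih]

lemma eq_root_iff (v : σ) : v = T.root ↔ T.depth v = 0 :=
  ⟨fun h => h ▸ T.depth_root, fun h => T.root_of_depth v h⟩

lemma anc_root (k : ℕ) : T.anc T.root k = T.root := by
  induction k with
  | zero => rfl
  | succ k ih => show T.par _ = _; rw [ih, T.par_root]

lemma depth_anc (v : σ) (k : ℕ) (h : k ≤ T.depth v) :
    T.depth (T.anc v k) = T.depth v - k := by
  induction k with
  | zero => rfl
  | succ k ih =>
    have hk : k ≤ T.depth v := Nat.le_of_succ_le h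
    have hne : T.anc v k ≠ T.root := by
      rw [Ne, eq_root_iff, ih hk]
      omega
    have := T.depth_par _ hne
    show T.depth (T.par (T.anc v k)) = _
    omega

lemma anc_depth (v : σ) : T.anc v (T.depth v) = T.root := by
  rw [eq_root_iff, depth_anc T v _ le_rfl]
  omega

lemma anc_of_ge (v : σ) (k : ℕ) (h : T.depth v ≤ k) : T.anc v k = T.root := by
  have hk : k = T.depth v + (k - T.depth v) := by omega
  rw [hk, anc_add, anc_depth, anc_root]

lemma anc_min (v : σ) (j : ℕ) : T.anc v (min j (T.depth v)) = T.anc v j := by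
  rcases le_total j (T.depth v) with h | h
  · rw [min_eq_left h]
  · rw [min_eq_right h, anc_of_ge T v j h, anc_of_ge T v _ le_rfl]

lemma upMax_nonneg (v : σ) (k : ℕ) : 0 ≤ T.upMax v k := by
  induction k with
  | zero => exact le_rfl
  | succ k ih => exact le_trans ih (le_max_left _ _)

lemma upMax_le {c : ℝ} (v : σ) (k : ℕ) (hc : 0 ≤ c)
    (h : ∀ i < k, T.w (T.anc v i) ≤ c) : T.upMax v k ≤ c := by
  induction k with
  | zero => exact hc
  | succ k ih =>
    exact max_le (ih fun i hi => h i (Nat.lt_succ_of_lt hi)) (h k (Nat.lt_succ_self k))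

lemma le_upMax (v : σ) {i k : ℕ} (h : i < k) : T.w (T.anc v i) ≤ T.upMax v k := by
  induction k with
  | zero => omega
  | succ k ih =>
    rcases Nat.lt_succ_iff_lt_or_eq.mp h with h' | h'
    · exact le_trans (ih h') (le_max_left _ _)
    · subst h'; exact le_max_right _ _

lemma upMax_mono (v : σ) {j k : ℕ} (h : j ≤ k) : T.upMax v j ≤ T.upMax v k :=
  upMax_le T v j (upMax_nonneg T v k) fun i hi => le_upMax T v (lt_of_lt_of_le hi h)

lemma upMax_shift (v : σ) {j k : ℕ} (h : j ≤ k) :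
    T.upMax (T.anc v j) (k - j) ≤ T.upMax v k := by
  refine upMax_le T _ _ (upMax_nonneg T v k) fun i hi => ?_
  rw [← anc_add]
  exact le_upMax T v (by omega)

lemma w_chain (v : σ) {t s : ℕ} (h1 : t ≤ s) (h2 : s < T.depth v) :
    T.w (T.anc v t) ≤ T.w (T.anc v s) := by
  induction s with
  | zero =>
    have : t = 0 := by omega
    subst this; exact le_rfl
  | succ s ih =>
    have hs : s < T.depth v := by omega
    have hstep : T.w (T.anc v s) ≤ T.w (T.anc v (s + 1)) := by
      have h3 : T.anc v s ≠ T.root := by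
        rw [Ne, eq_root_iff, depth_anc T v s (by omega)]; omega
      have h4 : T.par (T.anc v s) ≠ T.root := by
        show T.anc v (s + 1) ≠ T.root
        rw [Ne, eq_root_iff, depth_anc T v (s + 1) (by omega)]; omega
      exact T.w_mono _ h3 h4
    rcases Nat.lt_succ_iff_lt_or_eq.mp (Nat.lt_succ_of_le h1) with h' | h'
    · exact le_trans (ih (by omega) hs) hstep
    · subst h'; exact le_rfl

lemma srIdx_mem (r : ℝ) (v : σ) :
    T.srIdx r v ≤ T.depth v ∧ ∀ i < T.srIdx r v, T.w (T.anc v i) ≤ r / 4 :=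
by
  have hne : {k | k ≤ T.depth v ∧ ∀ i < k, T.w (T.anc v i) ≤ r / 4}.Nonempty :=
    ⟨0, by simp⟩
  have hb : BddAbove {k | k ≤ T.depth v ∧ ∀ i < k, T.w (T.anc v i) ≤ r / 4} :=
    ⟨T.depth v, fun k hk => hk.1⟩
  exact Nat.sSup_mem hne hb

lemma le_srIdx {r : ℝ} {v : σ} {k : ℕ} (h : k ≤ T.depth v)
    (h2 : ∀ i < k, T.w (T.anc v i) ≤ r / 4) : k ≤ T.srIdx r v :=
by
  have hb : BddAbove {k | k ≤ T.depth v ∧ ∀ i < k, T.w (T.anc v i) ≤ r / 4} :=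
    ⟨T.depth v, fun k hk => hk.1⟩
  exact le_csSup hb ⟨h, h2⟩

/-- Central claim: simplification of an ancestor below the simplification point. -/
lemma sr_anc {r : ℝ} {v : σ} {j : ℕ} (h : j ≤ T.srIdx r v) :
    T.sr r (T.anc v j) = T.sr r v := by
  obtain ⟨hi1, hi2⟩ := srIdx_mem T r v
  set i := T.srIdx r v with hidef
  have hjd : j ≤ T.depth v := le_trans h hi1
  have hdc : T.depth (T.anc v j) = T.depth v - j := depth_anc T v j hjd
  have hidx : T.srIdx r (T.anc v j) = i - j := by
    apply le_antisymm
    · obtain ⟨hm1, hm2⟩ := srIdx_mem T r (T.anc v j)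
      set m := T.srIdx r (T.anc v j)
      have : j + m ≤ i := by
        apply le_srIdx T (by omega)
        intro t ht
        rcases lt_or_ge t j with h' | h'
        · exact hi2 t (by omega)
        · have : T.anc v t = T.anc (T.anc v j) (t - j) := by
            rw [← anc_add]; congr 1; omega
          rw [this]
          exact hm2 _ (by omega)
      omega
    · apply le_srIdx T (by omega)
      intro t ht
      rw [← anc_add]
      exact hi2 _ (by omega)
  show T.anc (T.anc v j) (T.srIdx r (T.anc v j)) = T.anc v i
  rw [hidx, ← anc_add]
  congr 1; omega

lemma tset_nonempty (u v : σ) :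
    {c | ∃ j k, T.anc u j = T.anc v k ∧ c = max (T.upMax u j) (T.upMax v k)}.Nonempty :=
  ⟨_, T.depth u, T.depth v, by rw [anc_depth, anc_depth], rfl⟩

lemma tset_bdd (u v : σ) :
    BddBelow {c | ∃ j k, T.anc u j = T.anc v k ∧ c = max (T.upMax u j) (T.upMax v k)} := by
  refine ⟨0, ?_⟩
  rintro c ⟨j, k, -, rfl⟩
  exact le_trans (upMax_nonneg T u j) (le_max_left _ _)

lemma tdist_nonneg (u v : σ) : 0 ≤ T.tdist u v := by
  refine le_csInf (tset_nonempty T u v) ?_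
  rintro c ⟨j, k, -, rfl⟩
  exact le_trans (upMax_nonneg T u j) (le_max_left _ _)

lemma sr_eq_of_branch {r : ℝ} {u v : σ} {j k : ℕ} (hj : j ≤ T.depth u) (hk : k ≤ T.depth v)
    (hc : T.anc u j = T.anc v k) (hlt : j < T.srIdx r u) : T.sr r u = T.sr r v := by
  obtain ⟨hi1, hi2⟩ := srIdx_mem T r u
  have hwc : T.w (T.anc u j) ≤ r / 4 := hi2 j hlt
  have hcne : T.anc u j ≠ T.root := by
    rw [Ne, eq_root_iff, depth_anc T u j hj]; omega
  have hkd : k < T.depth v := by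
    rcases lt_or_eq_of_le hk with h' | h'
    · exact h'
    · exfalso; apply hcne; rw [hc, h', anc_depth]
  have hkv : k ≤ T.srIdx r v := by
    apply le_srIdx T hk
    intro t ht
    calc T.w (T.anc v t) ≤ T.w (T.anc v k) := w_chain T v (le_of_lt ht) hkd
      _ = T.w (T.anc u j) := by rw [hc]
      _ ≤ r / 4 := hwc
  rw [← sr_anc T (le_of_lt hlt), ← sr_anc T hkv, hc]

lemma tdist_sr_le (r : ℝ) (u v : σ) : T.tdist (T.sr r u) (T.sr r v) ≤ T.tdist u v := by
  refine le_csInf (tset_nonempty T u v) ?_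
  rintro c ⟨j0, k0, hc0, rfl⟩
  set j := min j0 (T.depth u) with hjdef
  set k := min k0 (T.depth v) with hkdef
  have hc : T.anc u j = T.anc v k := by rw [hjdef, hkdef, anc_min, anc_min]; exact hc0
  have hj : j ≤ T.depth u := min_le_right _ _
  have hk : k ≤ T.depth v := min_le_right _ _
  have hmax : max (T.upMax u j) (T.upMax v k) ≤ max (T.upMax u j0) (T.upMax v k0) :=
    max_le_max (upMax_mono T u (min_le_left _ _)) (upMax_mono T v (min_le_left _ _))
  refine le_trans ?_ hmax
  by_cases hcase : T.srIdx r u ≤ j ∧ T.srIdx r v ≤ k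
  · obtain ⟨h1, h2⟩ := hcase
    have hmem : max (T.upMax (T.sr r u) (j - T.srIdx r u)) (T.upMax (T.sr r v) (k - T.srIdx r v)) ∈
        {c | ∃ j' k', T.anc (T.sr r u) j' = T.anc (T.sr r v) k' ∧
          c = max (T.upMax (T.sr r u) j') (T.upMax (T.sr r v) k')} := by
      refine ⟨_, _, ?_, rfl⟩
      show T.anc (T.anc u (T.srIdx r u)) _ = T.anc (T.anc v (T.srIdx r v)) _
      rw [← anc_add, ← anc_add]
      have e1 : T.srIdx r u + (j - T.srIdx r u) = j := by omega
      have e2 : T.srIdx r v + (k - T.srIdx r v) = k := by omega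
      rw [e1, e2]; exact hc
    refine le_trans (csInf_le (tset_bdd T _ _) hmem) ?_
    exact max_le_max (upMax_shift T u h1) (upMax_shift T v h2)
  · have heq : T.sr r u = T.sr r v := by
      rcases not_and_or.mp hcase with h' | h'
      · exact sr_eq_of_branch T hj hk hc (by omega)
      · exact (sr_eq_of_branch T hk hj hc.symm (by omega)).symm
    have hmem : max (T.upMax (T.sr r u) 0) (T.upMax (T.sr r v) 0) ∈
        {c | ∃ j' k', T.anc (T.sr r u) j' = T.anc (T.sr r v) k' ∧
          c = max (T.upMax (T.sr r u) j') (T.upMax (T.sr r v) k')} := ⟨0, 0, heq, rfl⟩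
    refine le_trans (csInf_le (tset_bdd T _ _) hmem) ?_
    simp only [WSTree.upMax, max_self]
    exact le_trans (upMax_nonneg T u j) (le_max_left _ _)

lemma sr_eq_of_tdist_lt {r : ℝ} {u v : σ} (h : T.tdist u v < r / 4) :
    T.sr r u = T.sr r v := by
  obtain ⟨c, ⟨j0, k0, hc0, rfl⟩, hlt⟩ := exists_lt_of_csInf_lt (tset_nonempty T u v) h
  set j := min j0 (T.depth u) with hjdef
  set k := min k0 (T.depth v) with hkdef
  have hc : T.anc u j = T.anc v k := by rw [hjdef, hkdef, anc_min, anc_min]; exact hc0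
  have hju : j ≤ T.srIdx r u := by
    refine le_srIdx T (min_le_right _ _) fun t ht => ?_
    refine le_of_lt (lt_of_le_of_lt ?_ hlt)
    exact le_trans (le_trans (le_upMax T u (lt_of_lt_of_le ht (min_le_left _ _)))
      (le_max_left _ _)) le_rfl
  have hkv : k ≤ T.srIdx r v := by
    refine le_srIdx T (min_le_right _ _) fun t ht => ?_
    refine le_of_lt (lt_of_le_of_lt ?_ hlt)
    exact le_trans (le_upMax T v (lt_of_lt_of_le ht (min_le_left _ _))) (le_max_right _ _)
  rw [← sr_anc T hju, ← sr_anc T hkv, hc]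

lemma hamDist_sr_le [DecidableEq σ] {r : ℝ} (u v : σ) :
    r / 4 * hamDist (T.sr r u) (T.sr r v) ≤ T.tdist u v := by
  by_cases he : T.sr r u = T.sr r v
  · simp only [hamDist]; rw [if_pos he, mul_zero]
    exact tdist_nonneg T u v
  · simp only [hamDist]; rw [if_neg he, mul_one]
    by_contra hlt
    exact he (sr_eq_of_tdist_lt T (lt_of_not_ge hlt))

end TreeAux

section ListAux
variable {α β : Type*}

lemma sum_zipWith_le (δ1 δ2 : α → α → ℝ) (h : ∀ a b, δ1 a b ≤ δ2 a b) :
    ∀ (l m : List α), (List.zipWith δ1 l m).sum ≤ (List.zipWith δ2 l m).sum := by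
  intro l
  induction l with
  | nil => intro m; simp
  | cons a l ih =>
    intro m
    cases m with
    | nil => simp
    | cons b m => simpa using add_le_add (h a b) (ih m)

lemma sum_zipWith_smul (c : ℝ) (δ : α → α → ℝ) :
    ∀ (l m : List α), (List.zipWith (fun a b => c * δ a b) l m).sum
      = c * (List.zipWith δ l m).sum := by
  intro l
  induction l with
  | nil => intro m; simp
  | cons a l ih =>
    intro m
    cases m with
    | nil => simp
    | cons b m => simp [ih m, mul_add]

lemma flatten_replicate_length :
    ∀ (x : List α) (ks : List ℕ), ks.length = x.length →
      ((List.zipWith (fun a k => List.replicate k a) x ks).flatten).length = ks.sum := by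
  intro x
  induction x with
  | nil => intro ks h; simp at h; simp [h]
  | cons a x ih =>
    intro ks h
    cases ks with
    | nil => simp at h
    | cons k ks => simp at h; simp [ih ks h, Nat.add_comm]

lemma isExpansion_map (f : α → β) {x xb : List α} (h : IsExpansion x xb) :
    IsExpansion (x.map f) (xb.map f) := by
  obtain ⟨ks, hlen, hpos, rfl⟩ := h
  refine ⟨ks, by simpa using hlen, hpos, ?_⟩
  rw [List.map_flatten, List.map_zipWith, List.zipWith_map_left]
  simp only [List.map_replicate]

lemma exists_expansion_length (f : α → β) {x : List α} {xb' : List β}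
    (h : IsExpansion (x.map f) xb') : ∃ xb, IsExpansion x xb ∧ xb.length = xb'.length := by
  obtain ⟨ks, hlen, hpos, rfl⟩ := h
  have hlen' : ks.length = x.length := by simpa using hlen
  refine ⟨_, ⟨ks, hlen', hpos, rfl⟩, ?_⟩
  rw [flatten_replicate_length x ks hlen', flatten_replicate_length (x.map f) ks hlen]

lemma corrCost_nonneg_s9 (δ : α → α → ℝ) (h : ∀ a b, 0 ≤ δ a b) (xb yb : List α) :
    0 ≤ corrCost δ xb yb := by
  have h0 : (List.zipWith (fun (_ _ : α) => (0 : ℝ)) xb yb).sum = 0 := by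
    induction xb generalizing yb with
    | nil => simp
    | cons a l ih => cases yb <;> simp [ih]
  have := sum_zipWith_le (fun _ _ => (0 : ℝ)) δ h xb yb
  rw [h0] at this
  exact this

end ListAux

/-- If dtw(x, y) ≤ nr/α then dtw(s_r(x), s_r(y)) ≤ nr/α and
dtw₀(s_r(x), s_r(y)) ≤ 4n/α. -/
theorem dtw_sr_le {σ : Type*} [DecidableEq σ] (T : WSTree σ) (r a : ℝ) (hr : 1 ≤ r)
    (ha : 0 < a) (n : ℕ) (x y : List σ) (hx : x.length ≤ n) (hy : y.length ≤ n)
    (h : dtw T.tdist x y ≤ n * r / a) :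
    dtw T.tdist (x.map (T.sr r)) (y.map (T.sr r)) ≤ n * r / a ∧
      dtw0 (x.map (T.sr r)) (y.map (T.sr r)) ≤ 4 * n / a := by
  have hr0 : (0 : ℝ) < r := lt_of_lt_of_le one_pos hr
  have hb1 : (0 : ℝ) ≤ n * r / a := by positivity
  have hb2 : (0 : ℝ) ≤ 4 * n / a := by positivity
  set f := T.sr r with hf
  -- sets
  set S : Set ℝ := {c | ∃ xb yb, IsCorrespondence x y xb yb ∧ c = corrCost T.tdist xb yb}
    with hS
  set S1 : Set ℝ := {c | ∃ xb yb, IsCorrespondence (x.map f) (y.map f) xb yb ∧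
    c = corrCost T.tdist xb yb} with hS1
  set S2 : Set ℝ := {c | ∃ xb yb, IsCorrespondence (x.map f) (y.map f) xb yb ∧
    c = corrCost hamDist xb yb} with hS2
  have hbdd1 : BddBelow S1 := by
    refine ⟨0, ?_⟩
    rintro c ⟨xb, yb, -, rfl⟩
    exact corrCost_nonneg_s9 _ (tdist_nonneg T) xb yb
  have hbdd2 : BddBelow S2 := by
    refine ⟨0, ?_⟩
    rintro c ⟨xb, yb, -, rfl⟩
    refine corrCost_nonneg_s9 _ (fun u v => ?_) xb yb
    unfold hamDist; split <;> norm_num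
  have hmapcorr : ∀ {xb yb : List σ}, IsCorrespondence x y xb yb →
      IsCorrespondence (x.map f) (y.map f) (xb.map f) (yb.map f) := by
    rintro xb yb ⟨h1, h2, h3⟩
    exact ⟨isExpansion_map f h1, isExpansion_map f h2, by simpa using h3⟩
  by_cases hSne : S.Nonempty
  · constructor
    · -- dtw tdist bound
      show sInf S1 ≤ n * r / a
      refine le_trans (le_csInf hSne ?_) h
      rintro c ⟨xb, yb, hc, rfl⟩
      refine le_trans (csInf_le hbdd1 ⟨xb.map f, yb.map f, hmapcorr hc, rfl⟩) ?_
      show (List.zipWith T.tdist (xb.map f) (yb.map f)).sum ≤ _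
      rw [List.zipWith_map]
      exact sum_zipWith_le _ _ (fun u v => tdist_sr_le T r u v) xb yb
    · -- dtw0 bound
      show sInf S2 ≤ 4 * n / a
      have key : r / 4 * sInf S2 ≤ sInf S := by
        refine le_csInf hSne ?_
        rintro c ⟨xb, yb, hc, rfl⟩
        have h1 : sInf S2 ≤ corrCost hamDist (xb.map f) (yb.map f) :=
          csInf_le hbdd2 ⟨xb.map f, yb.map f, hmapcorr hc, rfl⟩
        have h2 : r / 4 * corrCost hamDist (xb.map f) (yb.map f) ≤ corrCost T.tdist xb yb := by
          show r / 4 * (List.zipWith hamDist (xb.map f) (yb.map f)).sum ≤ _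
          rw [List.zipWith_map, ← sum_zipWith_smul]
          exact sum_zipWith_le _ _ (fun u v => hamDist_sr_le T u v) xb yb
        calc r / 4 * sInf S2 ≤ r / 4 * corrCost hamDist (xb.map f) (yb.map f) :=
              mul_le_mul_of_nonneg_left h1 (by linarith)
          _ ≤ corrCost T.tdist xb yb := h2
      have key2 : r / 4 * sInf S2 ≤ n * r / a := le_trans key h
      have key3 : (r / 4 * sInf S2) * a ≤ n * r := by
        have := mul_le_mul_of_nonneg_right key2 (le_of_lt ha)
        rwa [div_mul_cancel₀ _ (ne_of_gt ha)] at this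
      rw [le_div_iff₀ ha]
      nlinarith [key3, hr0]
  · -- no correspondence exists
    have hS1e : S1 = ∅ := by
      rw [Set.eq_empty_iff_forall_notMem]
      rintro c ⟨xb', yb', ⟨he1, he2, hl⟩, rfl⟩
      obtain ⟨xb, hxb, hxbl⟩ := exists_expansion_length f he1
      obtain ⟨yb, hyb, hybl⟩ := exists_expansion_length f he2
      exact hSne ⟨_, xb, yb, ⟨hxb, hyb, by omega⟩, rfl⟩
    have hS2e : S2 = ∅ := by
      rw [Set.eq_empty_iff_forall_notMem]
      rintro c ⟨xb', yb', ⟨he1, he2, hl⟩, rfl⟩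
      obtain ⟨xb, hxb, hxbl⟩ := exists_expansion_length f he1
      obtain ⟨yb, hyb, hybl⟩ := exists_expansion_length f he2
      exact hSne ⟨_, xb, yb, ⟨hxb, hyb, by omega⟩, rfl⟩
    constructor
    · show sInf S1 ≤ n * r / a
      rw [hS1e, Real.sInf_empty]; exact hb1
    · show sInf S2 ≤ 4 * n / a
      rw [hS2e, Real.sInf_empty]; exact hb2
end
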